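/- Correctness of the Lyubashevsky–Micciancio one-time signature from Ring-SIS (norm bound): let n, m, b, w be positive integers. For each i = 1, …, m, let k1_i, k2_i ∈ ℤ[X] be polynomials of degree < n with ‖k1_i‖_∞ ≤ b and ‖k2_i‖_∞ ≤ w·b, and let m1 ∈ ℤ[X] be a polynomial of degree < n whose coefficients all lie in {−1, 0, 1} and with ‖m1‖_1 ≤ w. Then for each i, the remainder s_i of k1_i·m1 + k2_i upon division by X^n + 1 satisfies ‖s_i‖_∞ ≤ 2·w·b. -/

import Mathlib

open Polynomial

/-- The ℓ∞ norm `‖f‖_∞ = max_j |f_j|` of an integer polynomial. -/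
noncomputable def polyLinf (f : Polynomial ℤ) : ℕ :=
  f.support.sup fun j => (f.coeff j).natAbs

/-- The ℓ1 norm `‖f‖_1 = Σ_j |f_j|` of an integer polynomial. -/
noncomputable def polyL1 (f : Polynomial ℤ) : ℕ :=
  ∑ j ∈ f.support, (f.coeff j).natAbs

lemma linf_coeff (p : Polynomial ℤ) (B : ℕ) (h : polyLinf p ≤ B) (j : ℕ) :
    (p.coeff j).natAbs ≤ B := by
  by_cases hj : j ∈ p.support
  · exact le_trans (Finset.le_sup (f := fun j => (p.coeff j).natAbs) hj) h
  · simp [Polynomial.notMem_support_iff.mp hj]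

lemma l1_range (p : Polynomial ℤ) (N : ℕ) :
    ∑ c ∈ Finset.range N, (p.coeff c).natAbs ≤ polyL1 p := by
  apply Finset.sum_le_sum_of_ne_zero
  intro x _ hx
  simp only [Polynomial.mem_support_iff]
  intro h0
  simp [h0] at hx

lemma natAbs_sum_le' (s : Finset ℕ) (f : ℕ → ℤ) :
    (∑ i ∈ s, f i).natAbs ≤ ∑ i ∈ s, (f i).natAbs := by
  classical
  induction s using Finset.induction with
  | empty => simp
  | insert _ _ h ih =>
      rw [Finset.sum_insert h, Finset.sum_insert h]
      exact le_trans (Int.natAbs_add_le _ _) (by omega)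

lemma coeff_range_sum (n : ℕ) (a : ℕ → ℤ) (t : ℕ) :
    (∑ j ∈ Finset.range n, C (a j) * X ^ j).coeff t = if t < n then a t else 0 := by
  simp [Polynomial.finset_sum_coeff, Polynomial.coeff_C_mul, Polynomial.coeff_X_pow,
    Finset.sum_ite_eq', Finset.mem_range]

lemma mod_xn_add_one (n : ℕ) (hn : 1 ≤ n) (f : Polynomial ℤ)
    (hf : f.degree < (2 * n : ℕ)) :
    f %ₘ (X ^ n + 1) =
      ∑ j ∈ Finset.range n, C (f.coeff j - f.coeff (j + n)) * X ^ j := by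
  set r : Polynomial ℤ := ∑ j ∈ Finset.range n, C (f.coeff j - f.coeff (j + n)) * X ^ j with hr
  set f1 : Polynomial ℤ := ∑ j ∈ Finset.range n, C (f.coeff (j + n)) * X ^ j with hf1
  have hmonic : (X ^ n + 1 : Polynomial ℤ).Monic := by
    have : (1 : Polynomial ℤ) = C 1 := by simp
    rw [this]
    exact monic_X_pow_add_C 1 (by omega)
  have hdegg : (X ^ n + 1 : Polynomial ℤ).degree = n := by
    have : (1 : Polynomial ℤ) = C 1 := by simp
    rw [this]
    exact degree_X_pow_add_C (by omega) 1
  have hrdeg : r.degree < (X ^ n + 1 : Polynomial ℤ).degree := by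
    rw [hdegg]
    rw [Polynomial.degree_lt_iff_coeff_zero]
    intro t ht
    rw [hr, coeff_range_sum]
    have : ¬ t < n := by exact_mod_cast not_lt.mpr (by exact_mod_cast ht)
    simp [this]
  have hdecomp : f = f1 * (X ^ n + 1) + r := by
    ext t
    rw [Polynomial.coeff_add, mul_add, Polynomial.coeff_add, mul_one,
      Polynomial.coeff_mul_X_pow']
    rw [hr, hf1, coeff_range_sum, coeff_range_sum, coeff_range_sum]
    rcases lt_or_ge t n with h1 | h1
    · simp [h1, not_le.mpr h1]
    · have h2 : ¬ t < n := not_lt.mpr h1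
      rcases lt_or_ge t (2 * n) with h3 | h3
      · have h4 : t - n < n := by omega
        have h5 : t - n + n = t := by omega
        simp [h1, h2, h4, h5]
      · have h4 : ¬ t - n < n := by omega
        have h6 : f.coeff t = 0 := by
          apply Polynomial.coeff_eq_zero_of_degree_lt
          exact lt_of_lt_of_le hf (by exact_mod_cast Nat.cast_le.mpr h3)
        simp [h2, h4, h6]
  calc f %ₘ (X ^ n + 1) = (f1 * (X ^ n + 1) + r) %ₘ (X ^ n + 1) := by rw [← hdecomp]
    _ = f1 * (X ^ n + 1) %ₘ (X ^ n + 1) + r %ₘ (X ^ n + 1) := Polynomial.add_modByMonic _ _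
    _ = 0 + r := by
        rw [(Polynomial.modByMonic_eq_zero_iff_dvd hmonic).mpr (Dvd.intro_left f1 rfl),
          (Polynomial.modByMonic_eq_self_iff hmonic).mpr hrdeg]
    _ = r := zero_add r

lemma key_prod_bound (n B : ℕ) (p m1 : Polynomial ℤ) (hpdeg : p.degree < n)
    (hp : polyLinf p ≤ B) (j : ℕ) :
    ((p * m1).coeff j).natAbs + ((p * m1).coeff (j + n)).natAbs ≤ polyL1 m1 * B := by
  have hco : ∀ t, (p * m1).coeff t = ∑ c ∈ Finset.range (t + 1), m1.coeff c * p.coeff (t - c) := by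
    intro t
    rw [mul_comm, Polynomial.coeff_mul, Finset.Nat.sum_antidiagonal_eq_sum_range_succ_mk]
  have habs : ∀ t, ((p * m1).coeff t).natAbs ≤
      ∑ c ∈ Finset.range (t + 1), (m1.coeff c).natAbs * (p.coeff (t - c)).natAbs := by
    intro t
    rw [hco]
    refine le_trans (natAbs_sum_le' _ _) (le_of_eq ?_)
    exact Finset.sum_congr rfl fun c _ => Int.natAbs_mul _ _
  have hb1 : ((p * m1).coeff j).natAbs ≤ ∑ c ∈ Finset.range (j + 1), (m1.coeff c).natAbs * B := by
    refine le_trans (habs j) (Finset.sum_le_sum fun c _ => ?_)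
    exact Nat.mul_le_mul_left _ (linf_coeff p B hp _)
  have hb2 : ((p * m1).coeff (j + n)).natAbs ≤
      ∑ c ∈ Finset.Ico (j + 1) (j + n + 1), (m1.coeff c).natAbs * B := by
    refine le_trans (habs (j + n)) ?_
    have hsplit : ∑ c ∈ Finset.range (j + n + 1), (m1.coeff c).natAbs * (p.coeff (j + n - c)).natAbs
        = ∑ c ∈ Finset.Ico 0 (j + 1), (m1.coeff c).natAbs * (p.coeff (j + n - c)).natAbs
          + ∑ c ∈ Finset.Ico (j + 1) (j + n + 1), (m1.coeff c).natAbs * (p.coeff (j + n - c)).natAbs := by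
      rw [Finset.range_eq_Ico]
      exact (Finset.sum_Ico_consecutive _ (Nat.zero_le _) (by omega)).symm
    have hzero : ∑ c ∈ Finset.Ico 0 (j + 1), (m1.coeff c).natAbs * (p.coeff (j + n - c)).natAbs = 0 := by
      apply Finset.sum_eq_zero
      intro c hc
      rw [Finset.mem_Ico] at hc
      have : p.coeff (j + n - c) = 0 := by
        apply Polynomial.coeff_eq_zero_of_degree_lt
        exact lt_of_lt_of_le hpdeg (Nat.cast_le.mpr (show n ≤ j + n - c by omega))
      simp [this]
    rw [hsplit, hzero, zero_add]
    exact Finset.sum_le_sum fun c _ => Nat.mul_le_mul_left _ (linf_coeff p B hp _)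
  calc ((p * m1).coeff j).natAbs + ((p * m1).coeff (j + n)).natAbs
      ≤ ∑ c ∈ Finset.range (j + 1), (m1.coeff c).natAbs * B
        + ∑ c ∈ Finset.Ico (j + 1) (j + n + 1), (m1.coeff c).natAbs * B := Nat.add_le_add hb1 hb2
    _ = ∑ c ∈ Finset.range (j + n + 1), (m1.coeff c).natAbs * B := by
        rw [Finset.range_eq_Ico, Finset.range_eq_Ico]
        exact Finset.sum_Ico_consecutive (fun c => (m1.coeff c).natAbs * B) (Nat.zero_le _) (by omega)
    _ = (∑ c ∈ Finset.range (j + n + 1), (m1.coeff c).natAbs) * B := by rw [Finset.sum_mul]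
    _ ≤ polyL1 m1 * B := Nat.mul_le_mul_right _ (l1_range m1 _)

theorem ots_ringsis_norm_bound (n m b w : ℕ) (hn : 1 ≤ n) (hm : 1 ≤ m)
    (hb : 1 ≤ b) (hw : 1 ≤ w)
    (k1 k2 : Fin m → Polynomial ℤ)
    (hk1deg : ∀ i, (k1 i).degree < n) (hk2deg : ∀ i, (k2 i).degree < n)
    (hk1 : ∀ i, polyLinf (k1 i) ≤ b) (hk2 : ∀ i, polyLinf (k2 i) ≤ w * b)
    (m1 : Polynomial ℤ) (hm1deg : m1.degree < n)
    (hm1coeff : ∀ j, m1.coeff j = -1 ∨ m1.coeff j = 0 ∨ m1.coeff j = 1)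
    (hm1w : polyL1 m1 ≤ w) :
    ∀ i, polyLinf ((k1 i * m1 + k2 i) %ₘ (X ^ n + 1)) ≤ 2 * w * b := by
  intro i
  have hpm : ∀ t, 2 * n ≤ t → (k1 i * m1).coeff t = 0 := by
    intro t ht
    rw [Polynomial.coeff_mul]
    apply Finset.sum_eq_zero
    intro x hx
    rw [Finset.HasAntidiagonal.mem_antidiagonal] at hx
    rcases le_or_gt n x.1 with h | h
    · have : (k1 i).coeff x.1 = 0 :=
        Polynomial.coeff_eq_zero_of_degree_lt (lt_of_lt_of_le (hk1deg i) (Nat.cast_le.mpr h))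
      rw [this, zero_mul]
    · have : m1.coeff x.2 = 0 :=
        Polynomial.coeff_eq_zero_of_degree_lt
          (lt_of_lt_of_le hm1deg (Nat.cast_le.mpr (show n ≤ x.2 by omega)))
      rw [this, mul_zero]
  have hfdeg : (k1 i * m1 + k2 i).degree < (2 * n : ℕ) := by
    rw [Polynomial.degree_lt_iff_coeff_zero]
    intro t ht
    have ht' : 2 * n ≤ t := by exact_mod_cast ht
    rw [Polynomial.coeff_add, hpm t ht',
      Polynomial.coeff_eq_zero_of_degree_lt
        (lt_of_lt_of_le (hk2deg i) (Nat.cast_le.mpr (show n ≤ t by omega))), add_zero]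
  rw [mod_xn_add_one n hn _ hfdeg]
  apply Finset.sup_le
  intro j _
  rw [coeff_range_sum]
  by_cases hj : j < n
  · simp only [hj, if_true]
    have hq0 : (k2 i).coeff (j + n) = 0 :=
      Polynomial.coeff_eq_zero_of_degree_lt
        (lt_of_lt_of_le (hk2deg i) (Nat.cast_le.mpr (show n ≤ j + n by omega)))
    rw [Polynomial.coeff_add, Polynomial.coeff_add, hq0, add_zero]
    set a := (k1 i * m1).coeff j
    set c := (k1 i * m1).coeff (j + n)
    set d := (k2 i).coeff j
    have h1 : (a + d - c).natAbs ≤ (a - c).natAbs + d.natAbs := by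
      have h : a + d - c = (a - c) + d := by ring
      rw [h]; exact Int.natAbs_add_le _ _
    have h2 : (a - c).natAbs ≤ a.natAbs + c.natAbs := Int.natAbs_sub_le _ _
    have h3 : a.natAbs + c.natAbs ≤ polyL1 m1 * b :=
      key_prod_bound n b (k1 i) m1 (hk1deg i) (hk1 i) j
    have h4 : polyL1 m1 * b ≤ w * b := Nat.mul_le_mul_right _ hm1w
    have h5 : d.natAbs ≤ w * b := linf_coeff _ _ (hk2 i) j
    have h6 : 2 * w * b = w * b + w * b := by ring
    omega
  · simp [hj]
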